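/- If every token in a decoded sequence is a full terminal of the grammar's scanner (no token spans a partial subterminal), then the concatenated output's decomposition into terminals is exactly the concatenation of the per-token terminal sequences; conversely, if some token ends mid-terminal (a start or continuation subterminal), the terminal boundary crossing that token position does not coincide with the token boundary. -/
import Mathlib


/-- `IsDecomp Term s parts`: `parts` is a factorization of `s` into terminal matches. -/
def IsDecomp {A : Type} (Term : Set (List A)) (s : List A) (parts : List (List A)) : Prop :=
  parts.flatten = s ∧ ∀ p ∈ parts, p ∈ Term

/-- The boundary positions of a factorization `parts`: lengths of concatenations of
initial segments of `parts`. -/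
def boundaries {A : Type} (parts : List (List A)) : Set ℕ :=
  {n | ∃ j ≤ parts.length, n = ((parts.take j).flatten).length}

lemma take_flatten_len_mono {A : Type} (parts : List (List A)) {a b : ℕ} (h : a ≤ b) :
    ((parts.take a).flatten).length ≤ ((parts.take b).flatten).length := by
  have : parts.take b = parts.take a ++ ((parts.take b).drop a) := by
    conv_lhs => rw [← List.take_append_drop a (parts.take b)]
    rw [List.take_take, Nat.min_eq_left h]
  rw [this, List.flatten_append, List.length_append]
  omega

/-- `decomp` is the (assumed unique) terminal decomposition.
(i) If every decoded token of `ts` is a sequence of full terminals — token `i` carrying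
its own terminal factorization `seqs.get i` — then the terminal decomposition of the
concatenated output is exactly the concatenation of the per-token terminal sequences.
(ii) Conversely, if some token ends mid-terminal, i.e. its end position `p` falls
strictly inside a terminal of the decomposition of the output, then the terminal
boundary crossing that token does not coincide with the token boundary: `p` is not a
terminal boundary. -/
theorem full_terminal_tokens_decomp {A : Type} (Term : Set (List A))
    (decomp : List A → List (List A))
    (hdecomp : ∀ s, IsDecomp Term s (decomp s))
    (huniq : ∀ s parts, IsDecomp Term s parts → parts = decomp s) :
    (∀ (ts : List (List A)) (seqs : List (List (List A)))
        (hlen : ts.length = seqs.length),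
      (∀ i (h : i < ts.length),
        IsDecomp Term (ts.get ⟨i, h⟩) (seqs.get ⟨i, hlen ▸ h⟩)) →
      decomp ts.flatten = seqs.flatten) ∧
    (∀ (ts : List (List A)) (i : ℕ), i < ts.length →
      ∀ j < (decomp ts.flatten).length,
        (((decomp ts.flatten).take j).flatten).length < ((ts.take (i + 1)).flatten).length →
        ((ts.take (i + 1)).flatten).length <
          (((decomp ts.flatten).take (j + 1)).flatten).length →
        ((ts.take (i + 1)).flatten).length ∉ boundaries (decomp ts.flatten)) := by
  constructor
  · intro ts seqs hlen h
    have hts : ts = seqs.map List.flatten := by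
      apply List.ext_get
      · simp [hlen]
      · intro i h1 h2
        simp only [List.get_eq_getElem, List.getElem_map]
        exact ((h i h1).1).symm
    symm
    apply huniq
    constructor
    · rw [hts, ← List.flatten_flatten]
    · intro p hp
      rw [List.mem_flatten] at hp
      obtain ⟨l, hl, hpl⟩ := hp
      obtain ⟨k, hk, rfl⟩ := List.getElem_of_mem hl
      exact (h k (hlen ▸ hk)).2 _ hpl
  · intro ts i _ j _ hlt hgt hmem
    obtain ⟨j', hj', heq⟩ := hmem
    rcases le_or_gt j' j with h1 | h1
    · exact absurd hlt (by rw [heq]; exact not_lt.2 (take_flatten_len_mono _ h1))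
    · exact absurd hgt (by rw [heq]; exact not_lt.2 (take_flatten_len_mono _ h1))
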